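/- If S is an infinite set of points in the Euclidean plane ℝ² such that the Euclidean distance between any two points of S is an integer, then all points of S are collinear, i.e., S is contained in a single line. -/

import Mathlib

open scoped RealInnerProductSpace
open Polynomial

set_option maxHeartbeats 1000000

lemma erdos_anning_key (A B C : EuclideanSpace ℝ (Fin 2)) (hBA : B ≠ A)
    (hC : ∀ r : ℝ, C ≠ r • (B - A) +ᵥ A) (m n : ℝ) :
    {P : EuclideanSpace ℝ (Fin 2) |
      dist P A - dist P B = m ∧ dist P A - dist P C = n}.Finite := by
  have hBA0 : B - A ≠ 0 := sub_ne_zero.2 hBA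
  have hCA0 : C - A ≠ 0 := by
    intro h
    exact hC 0 (by simp [sub_eq_zero.1 h])
  have li : LinearIndependent ℝ ![B - A, C - A] := by
    rw [linearIndependent_fin2]
    refine ⟨by simpa using hCA0, fun a ha => ?_⟩
    simp only [Matrix.cons_val_one, Matrix.head_cons, Matrix.cons_val_zero] at ha
    rcases eq_or_ne a 0 with rfl | ha0
    · simp at ha; exact hBA0 ha.symm
    · apply hC a⁻¹
      have : C - A = a⁻¹ • (B - A) := by
        rw [← ha, smul_smul, inv_mul_cancel₀ ha0, one_smul]
      rw [vadd_eq_add, ← this]; abel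
  -- the linear map recording inner products with B - A and C - A
  let Φ : EuclideanSpace ℝ (Fin 2) →ₗ[ℝ] ℝ × ℝ :=
    { toFun := fun x => (⟪B - A, x⟫, ⟪C - A, x⟫)
      map_add' := by intro x y; simp [inner_add_right]
      map_smul' := by intro c x; simp [inner_smul_right] }
  have hspan : Submodule.span ℝ (Set.range ![B - A, C - A]) = ⊤ :=
    li.span_eq_top_of_card_eq_finrank (by simp)
  have hrange : Set.range ![B - A, C - A] = {B - A, C - A} := by
    simp [Matrix.range_cons, Matrix.range_empty, Set.pair_comm]
  have hinj : Function.Injective Φ := by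
    rw [← LinearMap.ker_eq_bot]
    rw [Submodule.eq_bot_iff]
    intro x hx
    have hx' : (⟪B - A, x⟫ : ℝ) = 0 ∧ (⟪C - A, x⟫ : ℝ) = 0 := by
      have : Φ x = 0 := hx
      exact ⟨congrArg Prod.fst this, congrArg Prod.snd this⟩
    have hxmem : x ∈ Submodule.span ℝ ({B - A, C - A} : Set _) := by
      rw [← hrange, hspan]; trivial
    obtain ⟨a, b, hab⟩ := Submodule.mem_span_pair.1 hxmem
    have : (⟪x, x⟫ : ℝ) = 0 := by
      nth_rewrite 2 [← hab]
      rw [inner_add_right, real_inner_smul_right, real_inner_smul_right,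
        real_inner_comm (B - A) x, real_inner_comm (C - A) x, hx'.1, hx'.2]
      ring
    exact inner_self_eq_zero.1 this
  have hsurj : Function.Surjective Φ :=
    (LinearMap.injective_iff_surjective_of_finrank_eq_finrank (by simp)).1 hinj
  let e : EuclideanSpace ℝ (Fin 2) ≃ₗ[ℝ] ℝ × ℝ := LinearEquiv.ofBijective Φ ⟨hinj, hsurj⟩
  set c₁ : ℝ := (‖B - A‖ ^ 2 - m ^ 2) / 2 with hc₁
  set c₂ : ℝ := (‖C - A‖ ^ 2 - n ^ 2) / 2 with hc₂
  set u : EuclideanSpace ℝ (Fin 2) := e.symm (c₁, c₂) with hu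
  set v : EuclideanSpace ℝ (Fin 2) := e.symm (m, n) with hv
  have heu : Φ u = (c₁, c₂) := e.apply_symm_apply _
  have hev : Φ v = (m, n) := e.apply_symm_apply _
  -- every point of the set is determined by its distance to A
  have hkey : ∀ P ∈ {P : EuclideanSpace ℝ (Fin 2) |
      dist P A - dist P B = m ∧ dist P A - dist P C = n},
      P - A = u + (dist P A) • v ∧
      (1 - ‖v‖ ^ 2) * (dist P A) ^ 2 - 2 * ⟪u, v⟫ * (dist P A) - ‖u‖ ^ 2 = 0 := by
    rintro P ⟨hP1, hP2⟩
    set t : ℝ := dist P A with ht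
    have ht2 : ‖P - A‖ ^ 2 = t ^ 2 := by rw [ht, dist_eq_norm]
    have h1 : (⟪B - A, P - A⟫ : ℝ) = m * t + c₁ := by
      have hPB : ‖P - B‖ ^ 2 = (t - m) ^ 2 := by
        rw [← dist_eq_norm]; rw [show dist P B = t - m by linarith]
      have hexp : ‖P - B‖ ^ 2 = ‖P - A‖ ^ 2 - 2 * ⟪P - A, B - A⟫ + ‖B - A‖ ^ 2 := by
        rw [show P - B = (P - A) - (B - A) by abel, norm_sub_sq_real]
      rw [hPB, ht2] at hexp
      rw [real_inner_comm, hc₁]; nlinarith [hexp]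
    have h2 : (⟪C - A, P - A⟫ : ℝ) = n * t + c₂ := by
      have hPC : ‖P - C‖ ^ 2 = (t - n) ^ 2 := by
        rw [← dist_eq_norm]; rw [show dist P C = t - n by linarith]
      have hexp : ‖P - C‖ ^ 2 = ‖P - A‖ ^ 2 - 2 * ⟪P - A, C - A⟫ + ‖C - A‖ ^ 2 := by
        rw [show P - C = (P - A) - (C - A) by abel, norm_sub_sq_real]
      rw [hPC, ht2] at hexp
      rw [real_inner_comm, hc₂]; nlinarith [hexp]
    have hPA : P - A = u + t • v := by
      have hL : Φ (P - A) = (m * t + c₁, n * t + c₂) := by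
        have : Φ (P - A) = ((⟪B - A, P - A⟫ : ℝ), (⟪C - A, P - A⟫ : ℝ)) := rfl
        rw [this, h1, h2]
      have hR : Φ (u + t • v) = (m * t + c₁, n * t + c₂) := by
        rw [map_add, map_smul, heu, hev]
        simp only [Prod.smul_mk, Prod.mk_add_mk, smul_eq_mul, Prod.mk.injEq]
        constructor <;> ring
      exact hinj (hL.trans hR.symm)
    refine ⟨hPA, ?_⟩
    have : t ^ 2 = ‖u + t • v‖ ^ 2 := by rw [← hPA, ht2]
    rw [norm_add_sq_real, real_inner_smul_right, norm_smul, mul_pow,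
      Real.norm_eq_abs, sq_abs] at this
    nlinarith [this]
  -- the quadratic polynomial
  set p : ℝ[X] := Polynomial.C (1 - ‖v‖ ^ 2) * X ^ 2 + Polynomial.C (-(2 * ⟪u, v⟫)) * X +
    Polynomial.C (-(‖u‖ ^ 2)) with hp
  by_cases hp0 : p = 0
  · -- degenerate case: contradiction with non-collinearity
    exfalso
    have hcoeff2 : 1 - ‖v‖ ^ 2 = 0 := by
      have h := congrArg (fun q => Polynomial.coeff q 2) hp0
      simp only [hp, Polynomial.coeff_add, Polynomial.coeff_C_mul, Polynomial.coeff_X_pow,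
        Polynomial.coeff_X, Polynomial.coeff_C, Polynomial.coeff_zero] at h
      norm_num at h ⊢
      linarith [h]
    have hcoeff1 : -(2 * ⟪u, v⟫) = 0 := by
      have h := congrArg (fun q => Polynomial.coeff q 1) hp0
      simp only [hp, Polynomial.coeff_add, Polynomial.coeff_C_mul, Polynomial.coeff_X_pow,
        Polynomial.coeff_X, Polynomial.coeff_C, Polynomial.coeff_zero] at h
      norm_num at h ⊢
      linarith [h]
    have hu0 : u = 0 := by
      have h := congrArg (fun q => Polynomial.coeff q 0) hp0
      simp only [hp, Polynomial.coeff_add, Polynomial.coeff_C_mul, Polynomial.coeff_X_pow,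
        Polynomial.coeff_X, Polynomial.coeff_C, Polynomial.coeff_zero] at h
      norm_num at h
      exact h
    have hv1 : ‖v‖ = 1 := by nlinarith [norm_nonneg v]
    have hv0 : v ≠ 0 := by rw [← norm_ne_zero_iff, hv1]; norm_num
    have hc10 : c₁ = 0 := by
      have := heu; rw [hu0, map_zero] at this
      exact (congrArg Prod.fst this).symm
    have hc20 : c₂ = 0 := by
      have := heu; rw [hu0, map_zero] at this
      exact (congrArg Prod.snd this).symm
    have hm : m ^ 2 = ‖B - A‖ ^ 2 := by
      rw [hc₁] at hc10; linarith
    have hn : n ^ 2 = ‖C - A‖ ^ 2 := by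
      rw [hc₂] at hc20; linarith
    have hBv : (⟪B - A, v⟫ : ℝ) = m := congrArg Prod.fst hev
    have hCv : (⟪C - A, v⟫ : ℝ) = n := congrArg Prod.snd hev
    have hr : ∃ r : ℝ, r ≠ 0 ∧ v = r • (B - A) := by
      rw [← norm_inner_eq_norm_iff hBA0 hv0 (𝕜 := ℝ)]
      rw [hv1, mul_one, hBv, Real.norm_eq_abs]
      nlinarith [abs_nonneg m, norm_nonneg (B - A), sq_abs m]
    have hs : ∃ s : ℝ, s ≠ 0 ∧ v = s • (C - A) := by
      rw [← norm_inner_eq_norm_iff hCA0 hv0 (𝕜 := ℝ)]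
      rw [hv1, mul_one, hCv, Real.norm_eq_abs]
      nlinarith [abs_nonneg n, norm_nonneg (C - A), sq_abs n]
    obtain ⟨r, hr0, hrv⟩ := hr
    obtain ⟨s, hs0, hsv⟩ := hs
    apply hC (s⁻¹ * r)
    have : C - A = (s⁻¹ * r) • (B - A) := by
      rw [mul_smul, ← hrv, hsv, inv_smul_smul₀ hs0]
    rw [vadd_eq_add, ← this]; abel
  · -- nondegenerate: the set injects into the roots of p
    apply Set.Finite.subset
      (Set.Finite.image (fun t : ℝ => (u + t • v) + A) (Polynomial.finite_setOf_isRoot hp0))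
    rintro P hP
    obtain ⟨hPA, hq⟩ := hkey P hP
    refine ⟨dist P A, ?_, ?_⟩
    · show Polynomial.IsRoot p (dist P A)
      simp only [hp, Polynomial.IsRoot, Polynomial.eval_add, Polynomial.eval_mul,
        Polynomial.eval_C, Polynomial.eval_pow, Polynomial.eval_X]
      nlinarith [hq]
    · show (u + dist P A • v) + A = P
      rw [← hPA]; abel

/-- **Erdős–Anning theorem**: an infinite set of points in the Euclidean plane
with pairwise integral distances is collinear. -/
theorem erdos_anning (S : Set (EuclideanSpace ℝ (Fin 2)))
    (hinf : S.Infinite)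
    (hdist : ∀ p ∈ S, ∀ q ∈ S, ∃ n : ℤ, dist p q = (n : ℝ)) :
    Collinear ℝ S := by
  by_contra hcol
  obtain ⟨A, hA⟩ := hinf.nonempty
  obtain ⟨B, hBS, hBA⟩ : ∃ B ∈ S, B ≠ A := by
    obtain ⟨B, hB⟩ := (hinf.diff (Set.finite_singleton A)).nonempty
    exact ⟨B, hB.1, by simpa using hB.2⟩
  have hline : ¬ ∀ p ∈ S, ∃ r : ℝ, p = r • (B - A) +ᵥ A := fun hall =>
    hcol ((collinear_iff_of_mem hA).2 ⟨B - A, hall⟩)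
  push_neg at hline
  obtain ⟨C, hCS, hC⟩ := hline
  have hC' : ∀ r : ℝ, C ≠ r • (B - A) +ᵥ A := fun r h => hC r h
  set k₁ : ℤ := ⌈dist A B⌉ with hk₁
  set k₂ : ℤ := ⌈dist A C⌉ with hk₂
  apply hinf
  apply Set.Finite.subset
    ((Set.finite_Icc ((-k₁, -k₂) : ℤ × ℤ) (k₁, k₂)).biUnion
      (fun z _ => erdos_anning_key A B C hBA hC' z.1 z.2))
  intro P hP
  obtain ⟨a, ha⟩ := hdist P hP A hA
  obtain ⟨b, hb⟩ := hdist P hP B hBS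
  obtain ⟨c, hc⟩ := hdist P hP C hCS
  have hab : |(a : ℝ) - b| ≤ dist A B := by
    rw [← ha, ← hb, dist_comm P A, dist_comm P B]
    exact abs_dist_sub_le A B P
  have hac : |(a : ℝ) - c| ≤ dist A C := by
    rw [← ha, ← hc, dist_comm P A, dist_comm P C]
    exact abs_dist_sub_le A C P
  have h1 : |a - b| ≤ k₁ := by
    have : ((|a - b| : ℤ) : ℝ) ≤ (k₁ : ℝ) := by
      push_cast
      exact hab.trans ((Int.le_ceil _).trans (by simp [hk₁]))
    exact_mod_cast this
  have h2 : |a - c| ≤ k₂ := by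
    have : ((|a - c| : ℤ) : ℝ) ≤ (k₂ : ℝ) := by
      push_cast
      exact hac.trans ((Int.le_ceil _).trans (by simp [hk₂]))
    exact_mod_cast this
  refine Set.mem_biUnion (x := ((a - b, a - c) : ℤ × ℤ)) ?_ ?_
  · rw [Set.mem_Icc]
    constructor <;> constructor <;> simp_all [abs_le]
  · refine ⟨?_, ?_⟩ <;> [rw [ha, hb]; rw [ha, hc]] <;> push_cast <;> ring
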